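/- In the free level semilattice, every element built from generators α₁, …, αₙ using ⊔ and suc is equal (modulo the level-semilattice equations: associativity, commutativity, idempotence of ⊔, l ⊔ suc l = suc l, suc(l ⊔ l') = suc l ⊔ suc l') to a join of terms of the form suc^{p_i}(α_{j_i}) with pairwise distinct generators α_{j_1}, …, α_{j_m}. -/

import Mathlib

/-- Level terms over `n` generators. -/
inductive LTerm (n : ℕ) : Type
  | var : Fin n → LTerm n
  | sup : LTerm n → LTerm n → LTerm n
  | suc : LTerm n → LTerm n

/-- The congruence generated by the level-semilattice equations. -/
inductive LEq {n : ℕ} : LTerm n → LTerm n → Prop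
  | refl (t) : LEq t t
  | symm {t u} : LEq t u → LEq u t
  | trans {t u v} : LEq t u → LEq u v → LEq t v
  | supCongr {t t' u u'} : LEq t t' → LEq u u' → LEq (LTerm.sup t u) (LTerm.sup t' u')
  | sucCongr {t t'} : LEq t t' → LEq (LTerm.suc t) (LTerm.suc t')
  | supAssoc (t u v) : LEq (LTerm.sup (LTerm.sup t u) v) (LTerm.sup t (LTerm.sup u v))
  | supComm (t u) : LEq (LTerm.sup t u) (LTerm.sup u t)
  | supIdem (t) : LEq (LTerm.sup t t) t
  | supSuc (t) : LEq (LTerm.sup t (LTerm.suc t)) (LTerm.suc t)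
  | sucSup (t u) : LEq (LTerm.suc (LTerm.sup t u)) (LTerm.sup (LTerm.suc t) (LTerm.suc u))

/-- The atom `suc^p (α_j)`. -/
def atom {n : ℕ} (pj : ℕ × Fin n) : LTerm n :=
  LTerm.suc^[pj.1] (LTerm.var pj.2)

/-- Join of a nonempty list of atoms. -/
def joinAtoms {n : ℕ} (hd : ℕ × Fin n) (tl : List (ℕ × Fin n)) : LTerm n :=
  tl.foldl (fun a pj => LTerm.sup a (atom pj)) (atom hd)

namespace LevelNF

variable {n : ℕ}

/-- Seed-based join. -/
def jn (a : LTerm n) (l : List (ℕ × Fin n)) : LTerm n :=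
  l.foldl (fun b x => LTerm.sup b (atom x)) a

theorem jn_cons (a : LTerm n) (x : ℕ × Fin n) (l : List (ℕ × Fin n)) :
    jn a (x :: l) = jn (a.sup (atom x)) l := rfl

theorem joinAtoms_eq (hd : ℕ × Fin n) (tl : List (ℕ × Fin n)) :
    joinAtoms hd tl = jn (atom hd) tl := rfl

theorem jn_seed_congr {a b : LTerm n} (h : LEq a b) (l : List (ℕ × Fin n)) :
    LEq (jn a l) (jn b l) := by
  induction l generalizing a b with
  | nil => exact h
  | cons x l ih => exact ih (LEq.supCongr h (LEq.refl _))

/-- `(a ⊔ b) ⊔ c = (a ⊔ c) ⊔ b`. -/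
theorem aci1 (a b c : LTerm n) : LEq ((a.sup b).sup c) ((a.sup c).sup b) :=
  (LEq.supAssoc a b c).trans <|
    (LEq.supCongr (LEq.refl a) (LEq.supComm b c)).trans <|
      LEq.symm (LEq.supAssoc a c b)

theorem jn_sup (a b : LTerm n) (l : List (ℕ × Fin n)) :
    LEq (jn (a.sup b) l) (b.sup (jn a l)) := by
  induction l generalizing a with
  | nil => exact LEq.supComm a b
  | cons x l ih =>
    rw [jn_cons, jn_cons]
    exact (jn_seed_congr (aci1 a b (atom x)) l).trans (ih (a.sup (atom x)))

/-- Pull a term into the seed from the left. -/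
theorem jn_sup_left (A b : LTerm n) (l : List (ℕ × Fin n)) :
    LEq (A.sup (jn b l)) (jn (A.sup b) l) :=
  ((jn_sup b A l).symm).trans (jn_seed_congr (LEq.supComm b A) l)

/-- Pull a term into the seed from the right. -/
theorem jn_sup_right (A b : LTerm n) (l : List (ℕ × Fin n)) :
    LEq ((jn b l).sup A) (jn (b.sup A) l) :=
  (LEq.supComm _ _).trans <|
    (jn_sup_left A b l).trans (jn_seed_congr (LEq.supComm A b) l)

theorem sup_iterate_suc (t : LTerm n) (k : ℕ) :
    LEq (t.sup (LTerm.suc^[k] t)) (LTerm.suc^[k] t) := by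
  induction k with
  | zero => exact LEq.supIdem t
  | succ k ih =>
    rw [Function.iterate_succ_apply']
    set s := LTerm.suc^[k] t with hs
    have h1 : LEq (t.sup s.suc) (t.sup (s.sup s.suc)) :=
      LEq.supCongr (LEq.refl t) (LEq.symm (LEq.supSuc s))
    have h2 : LEq (t.sup (s.sup s.suc)) ((t.sup s).sup s.suc) :=
      LEq.symm (LEq.supAssoc t s s.suc)
    have h3 : LEq ((t.sup s).sup s.suc) (s.sup s.suc) :=
      LEq.supCongr ih (LEq.refl _)
    exact h1.trans (h2.trans (h3.trans (LEq.supSuc s)))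

theorem atom_max (p q : ℕ) (j : Fin n) :
    LEq ((atom (p, j)).sup (atom (q, j))) (atom (max p q, j)) := by
  have key : ∀ p q : ℕ, p ≤ q →
      LEq ((atom (p, j)).sup (atom (q, j))) (atom (q, j)) := by
    intro p q hpq
    have : LTerm.suc^[q - p] (atom (p, j)) = atom (q, j) := by
      show LTerm.suc^[q - p] (LTerm.suc^[p] (LTerm.var j)) = LTerm.suc^[q] (LTerm.var j)
      rw [← Function.iterate_add_apply]
      congr 1
      omega
    rw [← this]
    exact sup_iterate_suc (atom (p, j)) (q - p)
  rcases le_total p q with h | h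
  · rw [max_eq_right h]; exact key p q h
  · rw [max_eq_left h]
    exact (LEq.supComm _ _).trans (key q p h)

/-- Insert an atom into a list, merging with an existing atom on the same variable. -/
def ins (x : ℕ × Fin n) : List (ℕ × Fin n) → List (ℕ × Fin n)
  | [] => [x]
  | y :: l => if x.2 = y.2 then (max y.1 x.1, y.2) :: l else y :: ins x l

theorem ins_snd_mem {x : ℕ × Fin n} {l : List (ℕ × Fin n)} {a : Fin n}
    (h : a ∈ (ins x l).map Prod.snd) : a = x.2 ∨ a ∈ l.map Prod.snd := by
  induction l with
  | nil =>
    left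
    simpa [ins] using h
  | cons y l ih =>
    by_cases hc : x.2 = y.2
    · rw [show ins x (y :: l) = (max y.1 x.1, y.2) :: l from by simp [ins, hc]] at h
      rw [List.map_cons, List.mem_cons] at h
      right
      rw [List.map_cons, List.mem_cons]
      exact h
    · rw [show ins x (y :: l) = y :: ins x l from by simp [ins, hc]] at h
      rw [List.map_cons, List.mem_cons] at h
      rcases h with h | h
      · right; rw [List.map_cons, List.mem_cons]; exact Or.inl h
      · rcases ih h with h' | h'
        · exact Or.inl h'
        · right; rw [List.map_cons, List.mem_cons]; exact Or.inr h'

theorem ins_nodup {x : ℕ × Fin n} {l : List (ℕ × Fin n)}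
    (h : (l.map Prod.snd).Nodup) : ((ins x l).map Prod.snd).Nodup := by
  induction l with
  | nil => simp [ins]
  | cons y l ih =>
    rw [List.map_cons, List.nodup_cons] at h
    by_cases hc : x.2 = y.2
    · rw [show ins x (y :: l) = (max y.1 x.1, y.2) :: l from by simp [ins, hc]]
      rw [List.map_cons, List.nodup_cons]
      exact h
    · rw [show ins x (y :: l) = y :: ins x l from by simp [ins, hc]]
      rw [List.map_cons, List.nodup_cons]
      refine ⟨fun hm => ?_, ih h.2⟩
      rcases ins_snd_mem hm with h' | h'
      · exact hc h'.symm
      · exact h.1 h'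

theorem ins_eq (x : ℕ × Fin n) (l : List (ℕ × Fin n)) (a : LTerm n) :
    LEq ((jn a l).sup (atom x)) (jn a (ins x l)) := by
  induction l generalizing a with
  | nil => exact LEq.refl _
  | cons y l ih =>
    by_cases hc : x.2 = y.2
    · obtain ⟨p, j⟩ := x
      obtain ⟨q, k⟩ := y
      simp only at hc
      subst hc
      rw [show ins (p, j) ((q, j) :: l) = (max q p, j) :: l from by simp [ins]]
      rw [jn_cons, jn_cons]
      refine (jn_sup_right (atom (p, j)) (a.sup (atom (q, j))) l).trans ?_
      refine jn_seed_congr ?_ l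
      exact (LEq.supAssoc a (atom (q, j)) (atom (p, j))).trans
        (LEq.supCongr (LEq.refl a) (atom_max q p j))
    · rw [show ins x (y :: l) = y :: ins x l from by simp [ins, hc]]
      rw [jn_cons, jn_cons]
      exact ih (a.sup (atom y))

/-- Insert an atom into a nonempty list (head/tail form). -/
def insP (x h : ℕ × Fin n) (t : List (ℕ × Fin n)) : (ℕ × Fin n) × List (ℕ × Fin n) :=
  if x.2 = h.2 then ((max h.1 x.1, h.2), t) else (h, ins x t)

theorem insP_eq (x h : ℕ × Fin n) (t : List (ℕ × Fin n)) :
    LEq ((joinAtoms h t).sup (atom x)) (joinAtoms (insP x h t).1 (insP x h t).2) := by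
  by_cases hc : x.2 = h.2
  · obtain ⟨p, j⟩ := x
    obtain ⟨q, k⟩ := h
    simp only at hc
    subst hc
    simp only [insP, if_pos rfl]
    rw [joinAtoms_eq, joinAtoms_eq]
    refine (jn_sup_right (atom (p, j)) (atom (q, j)) t).trans ?_
    exact jn_seed_congr (atom_max q p j) t
  · simp only [insP, if_neg hc]
    rw [joinAtoms_eq, joinAtoms_eq]
    exact ins_eq x t (atom h)

theorem insP_nodup (x h : ℕ × Fin n) (t : List (ℕ × Fin n))
    (hn : ((h :: t).map Prod.snd).Nodup) :
    (((insP x h t).1 :: (insP x h t).2).map Prod.snd).Nodup := by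
  by_cases hc : x.2 = h.2
  · simpa [insP, hc] using hn
  · simp only [insP, if_neg hc]
    rw [List.map_cons, List.nodup_cons] at hn ⊢
    refine ⟨fun hm => ?_, ins_nodup hn.2⟩
    rcases ins_snd_mem hm with h' | h'
    · exact hc h'.symm
    · exact hn.1 h'

/-- Merge a list of atoms into a nonempty list. -/
def mergeP (l : List (ℕ × Fin n)) (h : ℕ × Fin n) (t : List (ℕ × Fin n)) :
    (ℕ × Fin n) × List (ℕ × Fin n) :=
  match l with
  | [] => (h, t)
  | x :: xs => mergeP xs (insP x h t).1 (insP x h t).2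

theorem mergeP_eq (l : List (ℕ × Fin n)) (h : ℕ × Fin n) (t : List (ℕ × Fin n)) :
    LEq (jn (joinAtoms h t) l) (joinAtoms (mergeP l h t).1 (mergeP l h t).2) := by
  induction l generalizing h t with
  | nil => exact LEq.refl _
  | cons x xs ih =>
    rw [jn_cons]
    exact (jn_seed_congr (insP_eq x h t) xs).trans (ih _ _)

theorem mergeP_nodup (l : List (ℕ × Fin n)) (h : ℕ × Fin n) (t : List (ℕ × Fin n))
    (hn : ((h :: t).map Prod.snd).Nodup) :
    (((mergeP l h t).1 :: (mergeP l h t).2).map Prod.snd).Nodup := by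
  induction l generalizing h t with
  | nil => exact hn
  | cons x xs ih => exact ih _ _ (insP_nodup x h t hn)

def bump : ℕ × Fin n → ℕ × Fin n := fun x => (x.1 + 1, x.2)

theorem atom_bump (x : ℕ × Fin n) : atom (bump x) = (atom x).suc := by
  show LTerm.suc^[x.1 + 1] (LTerm.var x.2) = _
  rw [Function.iterate_succ_apply']
  rfl

theorem suc_jn (a : LTerm n) (l : List (ℕ × Fin n)) :
    LEq (LTerm.suc (jn a l)) (jn a.suc (l.map bump)) := by
  induction l generalizing a with
  | nil => exact LEq.refl _
  | cons x l ih =>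
    rw [List.map_cons, jn_cons, jn_cons]
    refine (ih (a.sup (atom x))).trans ?_
    refine jn_seed_congr ?_ (l.map bump)
    rw [atom_bump]
    exact LEq.sucSup a (atom x)

end LevelNF

open LevelNF
theorem stmt_12 {n : ℕ} (t : LTerm n) :
    ∃ (hd : ℕ × Fin n) (tl : List (ℕ × Fin n)),
      ((hd :: tl).map Prod.snd).Nodup ∧ LEq t (joinAtoms hd tl) := by
  induction t with
  | var j =>
    exact ⟨(0, j), [], by simp, LEq.refl _⟩
  | sup t u iht ihu =>
    obtain ⟨h₁, t₁, n₁, e₁⟩ := iht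
    obtain ⟨h₂, t₂, n₂, e₂⟩ := ihu
    refine ⟨(mergeP (h₂ :: t₂) h₁ t₁).1, (mergeP (h₂ :: t₂) h₁ t₁).2,
      mergeP_nodup _ _ _ n₁, ?_⟩
    refine (LEq.supCongr e₁ e₂).trans ?_
    have step1 : LEq ((joinAtoms h₁ t₁).sup (joinAtoms h₂ t₂))
        (jn (joinAtoms h₁ t₁) (h₂ :: t₂)) := by
      rw [joinAtoms_eq h₂ t₂, jn_cons]
      exact jn_sup_left (joinAtoms h₁ t₁) (atom h₂) t₂
    exact step1.trans (mergeP_eq (h₂ :: t₂) h₁ t₁)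
  | suc t iht =>
    obtain ⟨h₁, t₁, n₁, e₁⟩ := iht
    refine ⟨bump h₁, t₁.map bump, ?_, ?_⟩
    · simpa [List.map_map, bump, Function.comp_def] using n₁
    · refine (LEq.sucCongr e₁).trans ?_
      rw [joinAtoms_eq, joinAtoms_eq, atom_bump]
      exact suc_jn (atom h₁) t₁
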